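/- (Vanishing of the error term for large uniform arrays, Property 3) Fix z ∈ ℂ and φ ∈ ℝ. Then the averaged error term of a uniform circular array tends to zero as the number of antennas grows: lim_{N → ∞} (1/N) Σ_{n=1}^{N} E(2πn/N, φ, z) = 0; equivalently, lim_{N → ∞} Σ_{m ∈ ℤ, m ≠ 0} i^{mN} J_{mN}(z) e^{− i m N φ} = 0. -/

import Mathlib

/-- Bessel function of the first kind of integer order `s`, defined by Bessel's integral. -/
noncomputable def besselJ (s : ℤ) (z : ℂ) : ℂ :=
  (1 / (2 * (Real.pi : ℂ))) *
    ∫ τ in (-Real.pi)..Real.pi,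
      Complex.exp (Complex.I * (z * (Real.sin τ : ℂ) - (s : ℂ) * (τ : ℂ)))

/-- The error series `E(θ, φ, z) = Σ_{s ∈ ℤ, s ≠ 0} i^s J_s(z) e^{i s (θ − φ)}`. -/
noncomputable def errE (θ φ : ℝ) (z : ℂ) : ℂ :=
  ∑' s : {s : ℤ // s ≠ 0},
    Complex.I ^ (s : ℤ) * besselJ s z *
      Complex.exp (Complex.I * ((s : ℤ) : ℂ) * ((θ : ℂ) - (φ : ℂ)))


noncomputable def gfun (z : ℂ) (s : ℤ) (τ : ℝ) : ℂ :=
  Complex.exp (Complex.I * (z * (Real.sin τ : ℂ) - (s : ℂ) * (τ : ℂ)))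

lemma hasDerivAt_gfun (z : ℂ) (s : ℤ) (τ : ℝ) :
    HasDerivAt (gfun z s)
      (Complex.I * (z * (Real.cos τ : ℂ) - (s : ℂ)) * gfun z s τ) τ := by
  have hsin : HasDerivAt (fun τ : ℝ => ((Real.sin τ : ℂ))) (Real.cos τ) τ :=
    (Real.hasDerivAt_sin τ).ofReal_comp
  have hτ : HasDerivAt (fun τ : ℝ => ((τ : ℝ) : ℂ)) 1 τ := by
    simpa using (hasDerivAt_id τ).ofReal_comp
  have h1 : HasDerivAt (fun τ : ℝ => Complex.I * (z * (Real.sin τ : ℂ) - (s : ℂ) * (τ : ℂ)))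
      (Complex.I * (z * (Real.cos τ : ℂ) - (s : ℂ))) τ := by
    have := ((hsin.const_mul z).sub (hτ.const_mul (s : ℂ))).const_mul Complex.I
    simpa [mul_comm] using this
  have := h1.cexp
  rw [show Complex.I * (z * (Real.cos τ : ℂ) - (s:ℂ)) * gfun z s τ
    = gfun z s τ * (Complex.I * (z * (Real.cos τ : ℂ) - (s:ℂ))) from mul_comm _ _]
  exact this

lemma cont_gfun (z : ℂ) (s : ℤ) : Continuous (gfun z s) := by
  unfold gfun; fun_prop

lemma norm_gfun_le (z : ℂ) (s : ℤ) (τ : ℝ) : ‖gfun z s τ‖ ≤ Real.exp ‖z‖ := by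
  rw [gfun, Complex.norm_exp]
  apply Real.exp_le_exp.2
  have hre : (Complex.I * (z * (Real.sin τ : ℂ) - (s : ℂ) * (τ : ℂ))).re
      = -(z.im * Real.sin τ) := by
    simp only [Complex.mul_re, Complex.mul_im, Complex.sub_re, Complex.sub_im,
      Complex.I_re, Complex.I_im, Complex.ofReal_re, Complex.ofReal_im,
      Complex.intCast_re, Complex.intCast_im]
    ring
  rw [hre]
  calc -(z.im * Real.sin τ) ≤ |z.im * Real.sin τ| := neg_le_of_neg_le (by simpa using neg_abs_le (z.im * Real.sin τ))
    _ = |z.im| * |Real.sin τ| := abs_mul _ _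
    _ ≤ ‖z‖ * 1 := by
        apply mul_le_mul (Complex.abs_im_le_norm z) (Real.abs_sin_le_one τ) (abs_nonneg _) (norm_nonneg z)
    _ = ‖z‖ := mul_one _

noncomputable def besselJ' (s : ℤ) (z : ℂ) : ℂ :=
  (1 / (2 * (Real.pi : ℂ))) * ∫ τ in (-Real.pi)..Real.pi, gfun z s τ

lemma intInt_gfun (z : ℂ) (s : ℤ) :
    IntervalIntegrable (gfun z s) MeasureTheory.volume (-Real.pi) Real.pi :=
  (cont_gfun z s).intervalIntegrable _ _

lemma norm_besselJ'_le (s : ℤ) (z : ℂ) : ‖besselJ' s z‖ ≤ Real.exp ‖z‖ := by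
  have h := intervalIntegral.norm_integral_le_of_norm_le_const
    (C := Real.exp ‖z‖) (f := gfun z s) (a := -Real.pi) (b := Real.pi)
    (fun τ _ => norm_gfun_le z s τ)
  have hπ : |Real.pi - (-Real.pi)| = 2 * Real.pi := by
    rw [sub_neg_eq_add, abs_of_pos (by positivity)]; ring
  rw [hπ] at h
  rw [besselJ', norm_mul]
  have h2 : ‖(1 / (2 * (Real.pi : ℂ)))‖ = 1 / (2 * Real.pi) := by
    rw [norm_div, norm_one, norm_mul, Complex.norm_real, Real.norm_eq_abs,
      abs_of_pos Real.pi_pos]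
    norm_num
  rw [h2]
  rw [div_mul_eq_mul_div, one_mul, div_le_iff₀ (by positivity)]
  calc ‖∫ τ in (-Real.pi)..Real.pi, gfun z s τ‖ ≤ Real.exp ‖z‖ * (2 * Real.pi) := h
    _ = Real.exp ‖z‖ * (2 * Real.pi) := rfl

lemma gfun_periodic (z : ℂ) (s : ℤ) : gfun z s Real.pi = gfun z s (-Real.pi) := by
  unfold gfun
  rw [Real.sin_pi]
  rw [show Real.sin (-Real.pi) = 0 by simp]
  push_cast
  have h : Complex.exp (Complex.I * (z * 0 - (s:ℂ) * -(Real.pi:ℂ)))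
      = Complex.exp (Complex.I * (z * 0 - (s:ℂ) * (Real.pi:ℂ)) + (s:ℂ) * (2 * (Real.pi:ℂ) * Complex.I)) := by
    congr 1; ring
  rw [h, Complex.exp_add, Complex.exp_int_mul_two_pi_mul_I, mul_one]

lemma integral_deriv_zero (z : ℂ) (s : ℤ) :
    (∫ τ in (-Real.pi)..Real.pi,
      (z * (Real.cos τ : ℂ) - (s : ℂ)) * gfun z s τ) = 0 := by
  have h := intervalIntegral.integral_eq_sub_of_hasDerivAt
    (f := gfun z s)
    (f' := fun τ => Complex.I * (z * (Real.cos τ : ℂ) - (s : ℂ)) * gfun z s τ)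
    (a := -Real.pi) (b := Real.pi)
    (fun τ _ => hasDerivAt_gfun z s τ)
    (by apply Continuous.intervalIntegrable; unfold gfun; fun_prop)
  rw [gfun_periodic, sub_self] at h
  have h2 : (∫ τ in (-Real.pi)..Real.pi,
      Complex.I * ((z * (Real.cos τ : ℂ) - (s : ℂ)) * gfun z s τ)) = 0 := by
    rw [← h]; congr 1; ext τ; ring
  rw [intervalIntegral.integral_const_mul] at h2
  simpa [Complex.I_ne_zero] using h2

lemma cos_mul_gfun (z : ℂ) (s : ℤ) (τ : ℝ) :
    (Real.cos τ : ℂ) * gfun z s τ = (gfun z (s-1) τ + gfun z (s+1) τ) / 2 := by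
  rw [Complex.ofReal_cos, Complex.cos, gfun, gfun, gfun]
  have e1 : Complex.exp ((τ:ℂ) * Complex.I) * Complex.exp (Complex.I * (z * (Real.sin τ:ℂ) - (s:ℂ) * (τ:ℂ)))
      = Complex.exp (Complex.I * (z * (Real.sin τ:ℂ) - ((s-1 : ℤ):ℂ) * (τ:ℂ))) := by
    rw [← Complex.exp_add]; congr 1; push_cast; ring
  have e2 : Complex.exp (-(τ:ℂ) * Complex.I) * Complex.exp (Complex.I * (z * (Real.sin τ:ℂ) - (s:ℂ) * (τ:ℂ)))
      = Complex.exp (Complex.I * (z * (Real.sin τ:ℂ) - ((s+1 : ℤ):ℂ) * (τ:ℂ))) := by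
    rw [← Complex.exp_add]; congr 1; push_cast; ring
  calc (Complex.exp ((τ:ℂ) * Complex.I) + Complex.exp (-(τ:ℂ) * Complex.I)) / 2
        * Complex.exp (Complex.I * (z * (Real.sin τ:ℂ) - (s:ℂ) * (τ:ℂ)))
      = (Complex.exp ((τ:ℂ) * Complex.I) * Complex.exp (Complex.I * (z * (Real.sin τ:ℂ) - (s:ℂ) * (τ:ℂ)))
        + Complex.exp (-(τ:ℂ) * Complex.I) * Complex.exp (Complex.I * (z * (Real.sin τ:ℂ) - (s:ℂ) * (τ:ℂ)))) / 2 := by ring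
    _ = (Complex.exp (Complex.I * (z * (Real.sin τ:ℂ) - ((s-1:ℤ):ℂ) * (τ:ℂ)))
        + Complex.exp (Complex.I * (z * (Real.sin τ:ℂ) - ((s+1:ℤ):ℂ) * (τ:ℂ)))) / 2 := by rw [e1, e2]

lemma bessel_rec (z : ℂ) (s : ℤ) :
    (s : ℂ) * besselJ' s z = z / 2 * (besselJ' (s-1) z + besselJ' (s+1) z) := by
  have h := integral_deriv_zero z s
  have heq : ∀ τ : ℝ, (z * (Real.cos τ : ℂ) - (s : ℂ)) * gfun z s τ
      = z / 2 * gfun z (s-1) τ + z / 2 * gfun z (s+1) τ - (s:ℂ) * gfun z s τ := by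
    intro τ
    have := cos_mul_gfun z s τ
    have h2 : z * ((Real.cos τ : ℂ) * gfun z s τ) = z * ((gfun z (s-1) τ + gfun z (s+1) τ) / 2) := by rw [this]
    calc (z * (Real.cos τ : ℂ) - (s : ℂ)) * gfun z s τ
        = z * ((Real.cos τ : ℂ) * gfun z s τ) - (s:ℂ) * gfun z s τ := by ring
      _ = z * ((gfun z (s-1) τ + gfun z (s+1) τ) / 2) - (s:ℂ) * gfun z s τ := by rw [h2]
      _ = z / 2 * gfun z (s-1) τ + z / 2 * gfun z (s+1) τ - (s:ℂ) * gfun z s τ := by ring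
  rw [intervalIntegral.integral_congr (g := fun τ => z / 2 * gfun z (s-1) τ + z / 2 * gfun z (s+1) τ - (s:ℂ) * gfun z s τ) (fun τ _ => heq τ)] at h
  rw [intervalIntegral.integral_sub (((intInt_gfun z (s-1)).const_mul _).add ((intInt_gfun z (s+1)).const_mul _)) ((intInt_gfun z s).const_mul _),
    intervalIntegral.integral_add ((intInt_gfun z (s-1)).const_mul _) ((intInt_gfun z (s+1)).const_mul _),
    intervalIntegral.integral_const_mul, intervalIntegral.integral_const_mul,
    intervalIntegral.integral_const_mul, sub_eq_zero] at h
  unfold besselJ'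
  rw [show ((s:ℂ)) * ((1 / (2 * (Real.pi : ℂ))) * ∫ τ in (-Real.pi)..Real.pi, gfun z s τ)
    = (1 / (2 * (Real.pi : ℂ))) * ((s:ℂ) * ∫ τ in (-Real.pi)..Real.pi, gfun z s τ) by ring]
  rw [← h]
  ring

lemma rec_norm (z : ℂ) (s : ℤ) :
    |(s:ℝ)| * ‖besselJ' s z‖ ≤ ‖z‖ / 2 * (‖besselJ' (s-1) z‖ + ‖besselJ' (s+1) z‖) := by
  have h := congrArg norm (bessel_rec z s)
  rw [norm_mul, norm_mul] at h
  have hs : ‖((s:ℤ):ℂ)‖ = |(s:ℝ)| := by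
    rw [Complex.norm_intCast]
  have hz2 : ‖z / 2‖ = ‖z‖ / 2 := by
    rw [norm_div]; norm_num
  rw [hs, hz2] at h
  rw [h]
  exact mul_le_mul_of_nonneg_left (norm_add_le _ _) (by positivity)

lemma bd1 (z : ℂ) {s : ℤ} (hs : s ≠ 0) :
    ‖besselJ' s z‖ ≤ ‖z‖ * Real.exp ‖z‖ / |(s:ℝ)| := by
  have habs : (1:ℝ) ≤ |(s:ℝ)| := by
    have : (1:ℤ) ≤ |s| := Int.one_le_abs hs
    calc (1:ℝ) ≤ ((|s| : ℤ) : ℝ) := by exact_mod_cast this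
      _ = |(s:ℝ)| := by push_cast; simp
  have hpos : (0:ℝ) < |(s:ℝ)| := by linarith
  rw [le_div_iff₀ hpos, mul_comm]
  calc |(s:ℝ)| * ‖besselJ' s z‖
      ≤ ‖z‖ / 2 * (‖besselJ' (s-1) z‖ + ‖besselJ' (s+1) z‖) := rec_norm z s
    _ ≤ ‖z‖ / 2 * (Real.exp ‖z‖ + Real.exp ‖z‖) := by
        apply mul_le_mul_of_nonneg_left (add_le_add (norm_besselJ'_le _ _) (norm_besselJ'_le _ _))
          (by positivity)
    _ = ‖z‖ * Real.exp ‖z‖ := by ring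

lemma bd2 (z : ℂ) {s : ℤ} (hs : s ≠ 0) :
    ‖besselJ' s z‖ ≤ (‖z‖ * Real.exp ‖z‖ + 4 * ‖z‖^2 * Real.exp ‖z‖) / (s:ℝ)^2 := by
  set M := Real.exp ‖z‖ with hMdef
  have hM : 0 < M := Real.exp_pos _
  have hz : 0 ≤ ‖z‖ := norm_nonneg z
  have habs : ∀ t : ℤ, |(t:ℝ)| = ((|t| : ℤ) : ℝ) := fun t => by push_cast; simp
  rcases le_or_gt 2 |s| with h2 | h2
  · -- |s| ≥ 2
    rw [Int.abs_eq_natAbs] at h2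
    have hs1 : s - 1 ≠ 0 := by omega
    have hs2 : s + 1 ≠ 0 := by omega
    have ha : (2:ℝ) ≤ |(s:ℝ)| := by rw [habs, Int.abs_eq_natAbs]; exact_mod_cast h2
    have hapos : (0:ℝ) < |(s:ℝ)| := by linarith
    have hb1 : |(s:ℝ)| / 2 ≤ |((s-1:ℤ):ℝ)| := by
      rw [habs, habs]
      have : |s| ≤ 2 * |s - 1| := by simp only [Int.abs_eq_natAbs]; omega
      have : ((|s|:ℤ):ℝ) ≤ 2 * ((|s-1|:ℤ):ℝ) := by exact_mod_cast this
      linarith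
    have hb2 : |(s:ℝ)| / 2 ≤ |((s+1:ℤ):ℝ)| := by
      rw [habs, habs]
      have : |s| ≤ 2 * |s + 1| := by simp only [Int.abs_eq_natAbs]; omega
      have : ((|s|:ℤ):ℝ) ≤ 2 * ((|s+1|:ℤ):ℝ) := by exact_mod_cast this
      linarith
    have c1 : ‖besselJ' (s-1) z‖ ≤ 2 * ‖z‖ * M / |(s:ℝ)| := by
      calc ‖besselJ' (s-1) z‖ ≤ ‖z‖ * M / |((s-1:ℤ):ℝ)| := bd1 z hs1
        _ ≤ ‖z‖ * M / (|(s:ℝ)| / 2) := by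
            apply div_le_div_of_nonneg_left (by positivity) (by linarith) hb1
        _ = 2 * ‖z‖ * M / |(s:ℝ)| := by field_simp
    have c2 : ‖besselJ' (s+1) z‖ ≤ 2 * ‖z‖ * M / |(s:ℝ)| := by
      calc ‖besselJ' (s+1) z‖ ≤ ‖z‖ * M / |((s+1:ℤ):ℝ)| := bd1 z hs2
        _ ≤ ‖z‖ * M / (|(s:ℝ)| / 2) := by
            apply div_le_div_of_nonneg_left (by positivity) (by linarith) hb2
        _ = 2 * ‖z‖ * M / |(s:ℝ)| := by field_simp
    have key : |(s:ℝ)| * ‖besselJ' s z‖ ≤ 2 * ‖z‖^2 * M / |(s:ℝ)| := by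
      calc |(s:ℝ)| * ‖besselJ' s z‖
          ≤ ‖z‖ / 2 * (‖besselJ' (s-1) z‖ + ‖besselJ' (s+1) z‖) := rec_norm z s
        _ ≤ ‖z‖ / 2 * (2 * ‖z‖ * M / |(s:ℝ)| + 2 * ‖z‖ * M / |(s:ℝ)|) := by
            apply mul_le_mul_of_nonneg_left (add_le_add c1 c2) (by positivity)
        _ = 2 * ‖z‖^2 * M / |(s:ℝ)| := by field_simp; ring
    have hsq : |(s:ℝ)| * |(s:ℝ)| = (s:ℝ)^2 := by rw [← _root_.sq_abs ((s:ℝ))]; ring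
    rw [le_div_iff₀ (by positivity : (0:ℝ) < (s:ℝ)^2)]
    calc ‖besselJ' s z‖ * (s:ℝ)^2 = |(s:ℝ)| * ‖besselJ' s z‖ * |(s:ℝ)| := by
          rw [← hsq]; ring
      _ ≤ 2 * ‖z‖^2 * M / |(s:ℝ)| * |(s:ℝ)| := by
          apply mul_le_mul_of_nonneg_right key (abs_nonneg _)
      _ = 2 * ‖z‖^2 * M := by field_simp
      _ ≤ ‖z‖ * M + 4 * ‖z‖^2 * M := by nlinarith
  · -- |s| = 1
    rw [Int.abs_eq_natAbs] at h2
    have h1 : s = 1 ∨ s = -1 := by omega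
    have hsq : ((s:ℝ))^2 = 1 := by
      rcases h1 with h | h <;> rw [h] <;> norm_num
    rw [hsq, div_one]
    have ha1 : |(s:ℝ)| = 1 := by
      rcases h1 with h | h <;> rw [h] <;> norm_num
    calc ‖besselJ' s z‖ ≤ ‖z‖ * M / |(s:ℝ)| := bd1 z hs
      _ = ‖z‖ * M := by rw [ha1, div_one]
      _ ≤ ‖z‖ * M + 4 * ‖z‖^2 * M := by nlinarith

noncomputable def Cz (z : ℂ) : ℝ := ‖z‖ * Real.exp ‖z‖ + 4 * ‖z‖^2 * Real.exp ‖z‖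

lemma Cz_nonneg (z : ℂ) : 0 ≤ Cz z := by
  unfold Cz
  have := Real.exp_pos ‖z‖
  positivity

lemma besselJ_eq (s : ℤ) (z : ℂ) : besselJ s z = besselJ' s z := rfl

lemma besselJ_bd (z : ℂ) {s : ℤ} (hs : s ≠ 0) :
    ‖besselJ s z‖ ≤ Cz z * (1 / (s:ℝ)^2) := by
  rw [besselJ_eq, mul_one_div]
  exact bd2 z hs

lemma norm_term (s : ℤ) (z : ℂ) (w : ℂ) (hw : ‖w‖ = 1) :
    ‖Complex.I ^ s * besselJ s z * w‖ = ‖besselJ s z‖ := by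
  rw [norm_mul, norm_mul, norm_zpow, Complex.norm_I, one_zpow, one_mul, hw, mul_one]

lemma norm_exp1 (s : ℤ) (θ φ : ℝ) :
    ‖Complex.exp (Complex.I * ((s:ℤ):ℂ) * ((θ:ℂ) - (φ:ℂ)))‖ = 1 := by
  rw [show Complex.I * ((s:ℤ):ℂ) * ((θ:ℂ) - (φ:ℂ)) = (((s:ℝ) * (θ - φ) : ℝ):ℂ) * Complex.I by
    push_cast; ring]
  exact Complex.norm_exp_ofReal_mul_I _

lemma norm_exp2 (s : ℤ) (φ : ℝ) :
    ‖Complex.exp (-(Complex.I * ((s:ℤ):ℂ) * (φ:ℂ)))‖ = 1 := by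
  rw [show -(Complex.I * ((s:ℤ):ℂ) * (φ:ℂ)) = (((-((s:ℝ) * φ)) : ℝ):ℂ) * Complex.I by
    push_cast; ring]
  exact Complex.norm_exp_ofReal_mul_I _

lemma summable_inv_sq : Summable (fun m : {m : ℤ // m ≠ 0} => 1 / ((m:ℤ):ℝ)^2) := by
  have h : Summable (fun n : ℤ => 1 / (n:ℝ)^2) := Real.summable_one_div_int_pow.mpr (by norm_num)
  exact h.subtype _

lemma summable_bound (z : ℂ) : Summable (fun s : {s : ℤ // s ≠ 0} => Cz z * (1 / ((s:ℤ):ℝ)^2)) :=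
  summable_inv_sq.mul_left _

lemma summable_errE_term (z : ℂ) (θ φ : ℝ) :
    Summable (fun s : {s : ℤ // s ≠ 0} =>
      Complex.I ^ (s : ℤ) * besselJ s z *
        Complex.exp (Complex.I * ((s : ℤ) : ℂ) * ((θ : ℂ) - (φ : ℂ)))) := by
  apply Summable.of_norm_bounded (summable_bound z)
  intro s
  rw [norm_term _ _ _ (norm_exp1 s θ φ)]
  exact besselJ_bd z s.2

lemma norm_term2 (z : ℂ) (φ : ℝ) (N : ℕ) (hN : 1 ≤ N) (m : {m : ℤ // m ≠ 0}) :
    ‖Complex.I ^ ((m : ℤ) * N) * besselJ ((m : ℤ) * N) z *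
        Complex.exp (-(Complex.I * ((m : ℤ) : ℂ) * (N : ℂ) * (φ : ℂ)))‖
      ≤ Cz z / (N:ℝ)^2 * (1 / ((m:ℤ):ℝ)^2) := by
  have hNz : ((N:ℤ):ℝ) ≠ 0 := by positivity
  have hmN : (m:ℤ) * N ≠ 0 := mul_ne_zero m.2 (by exact_mod_cast (by omega : N ≠ 0))
  have hexp : ‖Complex.exp (-(Complex.I * ((m : ℤ) : ℂ) * (N : ℂ) * (φ : ℂ)))‖ = 1 := by
    rw [show -(Complex.I * ((m:ℤ):ℂ) * (N:ℂ) * (φ:ℂ))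
        = (((-(((m:ℤ):ℝ) * N * φ)) : ℝ):ℂ) * Complex.I by push_cast; ring]
    exact Complex.norm_exp_ofReal_mul_I _
  rw [norm_term _ _ _ hexp]
  calc ‖besselJ ((m:ℤ) * N) z‖ ≤ Cz z * (1 / (((m:ℤ) * N : ℤ):ℝ)^2) := besselJ_bd z hmN
    _ = Cz z / (N:ℝ)^2 * (1 / ((m:ℤ):ℝ)^2) := by
        push_cast
        rw [mul_pow]
        field_simp

lemma summable_term2 (z : ℂ) (φ : ℝ) (N : ℕ) (hN : 1 ≤ N) :
    Summable (fun m : {m : ℤ // m ≠ 0} =>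
      Complex.I ^ ((m : ℤ) * N) * besselJ ((m : ℤ) * N) z *
        Complex.exp (-(Complex.I * ((m : ℤ) : ℂ) * (N : ℂ) * (φ : ℂ)))) := by
  apply Summable.of_norm_bounded (summable_inv_sq.mul_left (Cz z / (N:ℝ)^2))
  exact norm_term2 z φ N hN

lemma part2_bound (z : ℂ) (φ : ℝ) (N : ℕ) (hN : 1 ≤ N) :
    ‖∑' m : {m : ℤ // m ≠ 0},
        Complex.I ^ ((m : ℤ) * N) * besselJ ((m : ℤ) * N) z *
          Complex.exp (-(Complex.I * ((m : ℤ) : ℂ) * (N : ℂ) * (φ : ℂ)))‖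
      ≤ Cz z * (∑' m : {m : ℤ // m ≠ 0}, 1 / ((m:ℤ):ℝ)^2) / (N:ℝ)^2 := by
  have h1 : Summable (fun m : {m : ℤ // m ≠ 0} =>
      ‖Complex.I ^ ((m : ℤ) * N) * besselJ ((m : ℤ) * N) z *
        Complex.exp (-(Complex.I * ((m : ℤ) : ℂ) * (N : ℂ) * (φ : ℂ)))‖) := by
    apply Summable.of_nonneg_of_le (fun _ => norm_nonneg _) (norm_term2 z φ N hN)
    exact summable_inv_sq.mul_left _
  calc ‖∑' m : {m : ℤ // m ≠ 0}, _‖ ≤ ∑' m : {m : ℤ // m ≠ 0},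
        ‖Complex.I ^ ((m : ℤ) * N) * besselJ ((m : ℤ) * N) z *
          Complex.exp (-(Complex.I * ((m : ℤ) : ℂ) * (N : ℂ) * (φ : ℂ)))‖ :=
      norm_tsum_le_tsum_norm h1
    _ ≤ ∑' m : {m : ℤ // m ≠ 0}, Cz z / (N:ℝ)^2 * (1 / ((m:ℤ):ℝ)^2) :=
      Summable.tsum_le_tsum (norm_term2 z φ N hN) h1 (summable_inv_sq.mul_left _)
    _ = Cz z / (N:ℝ)^2 * ∑' m : {m : ℤ // m ≠ 0}, 1 / ((m:ℤ):ℝ)^2 := tsum_mul_left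
    _ = Cz z * (∑' m : {m : ℤ // m ≠ 0}, 1 / ((m:ℤ):ℝ)^2) / (N:ℝ)^2 := by ring

lemma part2_tendsto (z : ℂ) (φ : ℝ) :
    Filter.Tendsto (fun N : ℕ => ∑' m : {m : ℤ // m ≠ 0},
        Complex.I ^ ((m : ℤ) * N) * besselJ ((m : ℤ) * N) z *
          Complex.exp (-(Complex.I * ((m : ℤ) : ℂ) * (N : ℂ) * (φ : ℂ))))
      Filter.atTop (nhds 0) := by
  set K := Cz z * (∑' m : {m : ℤ // m ≠ 0}, 1 / ((m:ℤ):ℝ)^2) with hK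
  apply squeeze_zero_norm' (a := fun N : ℕ => K * (1/(N:ℝ) * (1/(N:ℝ))))
  · filter_upwards [Filter.eventually_ge_atTop 1] with N hN
    have h := part2_bound z φ N hN
    calc ‖_‖ ≤ K / (N:ℝ)^2 := h
      _ = K * (1/(N:ℝ) * (1/(N:ℝ))) := by
          rw [div_mul_div_comm, one_mul, ← sq]
          rw [div_eq_mul_one_div]
  · have := (tendsto_one_div_atTop_nhds_zero_nat.mul
      tendsto_one_div_atTop_nhds_zero_nat).const_mul K
    simpa using this

lemma geom_sum_exp (N : ℕ) (hN : 1 ≤ N) (s : ℤ) :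
    (∑ n : Fin N, Complex.exp (Complex.I * ((s:ℤ):ℂ) *
        ((2 * Real.pi * ((n:ℕ) + 1 : ℝ) / N : ℝ) : ℂ)))
      = if (N:ℤ) ∣ s then (N:ℂ) else 0 := by
  have hNC : (N:ℂ) ≠ 0 := Nat.cast_ne_zero.mpr (by omega)
  set w := Complex.exp (Complex.I * ((s:ℤ):ℂ) * (2 * (Real.pi:ℂ) / N)) with hw
  have hterm : ∀ n : Fin N, Complex.exp (Complex.I * ((s:ℤ):ℂ) *
      ((2 * Real.pi * ((n:ℕ) + 1 : ℝ) / N : ℝ):ℂ)) = w^((n:ℕ)+1) := by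
    intro n
    rw [hw, ← Complex.exp_nat_mul]
    congr 1
    push_cast
    ring
  rw [Finset.sum_congr rfl (fun n _ => hterm n)]
  have hwN : w^N = 1 := by
    rw [hw, ← Complex.exp_nat_mul]
    rw [show (N:ℂ) * (Complex.I * ((s:ℤ):ℂ) * (2*(Real.pi:ℂ)/N))
        = (s:ℂ) * (2*(Real.pi:ℂ)*Complex.I) by field_simp]
    exact Complex.exp_int_mul_two_pi_mul_I s
  by_cases hdvd : (N:ℤ) ∣ s
  · obtain ⟨k, hk⟩ := hdvd
    have hw1 : w = 1 := by
      rw [hw, hk]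
      rw [show Complex.I * (((N:ℤ)*k : ℤ):ℂ) * (2*(Real.pi:ℂ)/N)
          = (k:ℂ)*(2*(Real.pi:ℂ)*Complex.I) by push_cast; field_simp]
      exact Complex.exp_int_mul_two_pi_mul_I k
    rw [if_pos ⟨k, hk⟩]
    simp [hw1]
  · rw [if_neg hdvd]
    have hw1 : w ≠ 1 := by
      intro hcon
      rw [hw, Complex.exp_eq_one_iff] at hcon
      obtain ⟨k, hk⟩ := hcon
      have e1 : (s:ℂ)*(2*(Real.pi:ℂ)*Complex.I)
          = (N:ℂ) * (Complex.I*((s:ℤ):ℂ)*(2*(Real.pi:ℂ)/(N:ℂ))) := by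
        field_simp
      rw [hk] at e1
      have hne : (2*(Real.pi:ℂ)*Complex.I) ≠ 0 := by
        simp [Real.pi_ne_zero, Complex.I_ne_zero, Complex.ofReal_ne_zero]
      have e2 : (s:ℂ) = (k:ℂ)*(N:ℂ) := by
        apply mul_right_cancel₀ hne
        rw [e1]; ring
      have e3 : s = k * N := by exact_mod_cast e2
      exact hdvd ⟨k, by rw [e3]; ring⟩
    have hsum : ∑ n : Fin N, w^((n:ℕ)+1) = (∑ n ∈ Finset.range N, w^n) * w := by
      rw [Fin.sum_univ_eq_sum_range (fun n => w^(n+1)) N, Finset.sum_mul]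
      exact Finset.sum_congr rfl (fun n _ => by rw [pow_succ])
    rw [hsum, geom_sum_eq hw1, hwN, sub_self, zero_div, zero_mul]

lemma part1_eq (z : ℂ) (φ : ℝ) (N : ℕ) (hN : 1 ≤ N) :
    (1 / (N : ℂ)) * ∑ n : Fin N, errE (2 * Real.pi * ((n : ℕ) + 1 : ℝ) / N) φ z
      = ∑' m : {m : ℤ // m ≠ 0},
        Complex.I ^ ((m : ℤ) * N) * besselJ ((m : ℤ) * N) z *
          Complex.exp (-(Complex.I * ((m : ℤ) : ℂ) * (N : ℂ) * (φ : ℂ))) := by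
  have hNZ : ((N:ℤ)) ≠ 0 := by exact_mod_cast (by omega : N ≠ 0)
  have hNC : (N:ℂ) ≠ 0 := Nat.cast_ne_zero.mpr (by omega)
  -- swap sums
  have hswap : ∑ n : Fin N, errE (2 * Real.pi * ((n : ℕ) + 1 : ℝ) / N) φ z
      = ∑' s : {s : ℤ // s ≠ 0}, ∑ n : Fin N,
          Complex.I ^ (s : ℤ) * besselJ s z *
            Complex.exp (Complex.I * ((s : ℤ) : ℂ) *
              (((2 * Real.pi * ((n:ℕ) + 1 : ℝ) / N : ℝ) : ℂ) - (φ : ℂ))) := by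
    unfold errE
    exact (Summable.tsum_finsetSum (s := Finset.univ)
      (f := fun (n : Fin N) (s : {s : ℤ // s ≠ 0}) =>
        Complex.I ^ (s : ℤ) * besselJ s z *
          Complex.exp (Complex.I * ((s : ℤ) : ℂ) *
            (((2 * Real.pi * ((n:ℕ) + 1 : ℝ) / N : ℝ) : ℂ) - (φ : ℂ))))
      (fun n _ => summable_errE_term z (2 * Real.pi * ((n:ℕ) + 1 : ℝ) / N) φ)).symm
  rw [hswap, ← tsum_mul_left]
  -- pointwise evaluation of the inner finite sum
  have hinner : ∀ s : {s : ℤ // s ≠ 0},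
      (1/(N:ℂ)) * ∑ n : Fin N,
          Complex.I ^ (s : ℤ) * besselJ s z *
            Complex.exp (Complex.I * ((s : ℤ) : ℂ) *
              (((2 * Real.pi * ((n:ℕ) + 1 : ℝ) / N : ℝ) : ℂ) - (φ : ℂ)))
        = if (N:ℤ) ∣ (s:ℤ) then
            Complex.I ^ (s : ℤ) * besselJ s z *
              Complex.exp (-(Complex.I * ((s : ℤ) : ℂ) * (φ : ℂ)))
          else 0 := by
    intro s
    have hsplit : ∀ n : Fin N,
        Complex.I ^ (s : ℤ) * besselJ s z *
            Complex.exp (Complex.I * ((s : ℤ) : ℂ) *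
              (((2 * Real.pi * ((n:ℕ) + 1 : ℝ) / N : ℝ) : ℂ) - (φ : ℂ)))
          = (Complex.I ^ (s : ℤ) * besselJ s z *
              Complex.exp (-(Complex.I * ((s : ℤ) : ℂ) * (φ : ℂ)))) *
            Complex.exp (Complex.I * ((s : ℤ) : ℂ) *
              ((2 * Real.pi * ((n:ℕ) + 1 : ℝ) / N : ℝ) : ℂ)) := by
      intro n
      rw [show Complex.I * ((s:ℤ):ℂ) * (((2 * Real.pi * ((n:ℕ) + 1 : ℝ) / N : ℝ) : ℂ) - (φ : ℂ))
          = (-(Complex.I * ((s:ℤ):ℂ) * (φ:ℂ))) +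
            Complex.I * ((s:ℤ):ℂ) * ((2 * Real.pi * ((n:ℕ) + 1 : ℝ) / N : ℝ) : ℂ) by ring,
        Complex.exp_add]
      try ring
    rw [Finset.sum_congr rfl (fun n _ => hsplit n), ← Finset.mul_sum, geom_sum_exp N hN (s:ℤ)]
    by_cases hdvd : (N:ℤ) ∣ (s:ℤ)
    · rw [if_pos hdvd, if_pos hdvd]
      field_simp
    · rw [if_neg hdvd, if_neg hdvd, mul_zero, mul_zero]
  rw [tsum_congr hinner]
  -- reindex by s = m * N
  set f : {s : ℤ // s ≠ 0} → ℂ := fun s =>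
    if (N:ℤ) ∣ (s:ℤ) then
      Complex.I ^ (s : ℤ) * besselJ s z *
        Complex.exp (-(Complex.I * ((s : ℤ) : ℂ) * (φ : ℂ)))
    else 0 with hf
  set g : {m : ℤ // m ≠ 0} → {s : ℤ // s ≠ 0} := fun m =>
    ⟨(m:ℤ) * N, mul_ne_zero m.2 hNZ⟩ with hg
  have hginj : Function.Injective g := by
    intro a b hab
    have : (a:ℤ) * N = (b:ℤ) * N := congrArg Subtype.val hab
    exact Subtype.ext (mul_right_cancel₀ hNZ this)
  have hsupp : Function.support f ⊆ Set.range g := by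
    intro s hs
    rw [Function.mem_support, hf] at hs
    by_cases hdvd : (N:ℤ) ∣ (s:ℤ)
    · obtain ⟨k, hk⟩ := hdvd
      have hk0 : k ≠ 0 := by
        intro h0
        exact s.2 (by rw [hk, h0, mul_zero])
      exact ⟨⟨k, hk0⟩, Subtype.ext (show (k:ℤ) * N = (s:ℤ) by rw [hk, mul_comm])⟩
    · exact absurd (if_neg hdvd) hs
  have hreindex := hginj.tsum_eq hsupp
  rw [← hreindex]
  apply tsum_congr
  intro m
  have hdvd : (N:ℤ) ∣ ((m:ℤ) * N) := dvd_mul_left _ _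
  simp only [hf, hg]
  rw [if_pos hdvd]
  congr 2
  push_cast
  ring

/-- Vanishing of the averaged error term for large uniform circular arrays:
`lim_{N → ∞} (1/N) Σ_{n=1}^{N} E(2πn/N, φ, z) = 0`, equivalently
`lim_{N → ∞} Σ_{m ≠ 0} i^{mN} J_{mN}(z) e^{−imNφ} = 0`. -/
theorem stmt9 (z : ℂ) (φ : ℝ) :
    Filter.Tendsto (fun N : ℕ =>
        (1 / (N : ℂ)) * ∑ n : Fin N, errE (2 * Real.pi * ((n : ℕ) + 1 : ℝ) / N) φ z)
      Filter.atTop (nhds 0) ∧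
    Filter.Tendsto (fun N : ℕ => ∑' m : {m : ℤ // m ≠ 0},
        Complex.I ^ ((m : ℤ) * N) * besselJ ((m : ℤ) * N) z *
          Complex.exp (-(Complex.I * ((m : ℤ) : ℂ) * (N : ℂ) * (φ : ℂ))))
      Filter.atTop (nhds 0) := by
  have h2 := part2_tendsto z φ
  refine ⟨h2.congr' ?_, h2⟩
  filter_upwards [Filter.eventually_ge_atTop 1] with N hN
  exact (part1_eq z φ N hN).symm
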